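/- Let α ∈ (1,2), c₊ ≥ 0, M > 0, x₀ ∈ (0,M), and let ν̄ : (0,M] → [0,∞) be measurable, integrable on [x₀,M], with |y^{α+1} ν̄(y) − α c₊| ≤ C₀ y for all 0 < y < x₀ and some constant C₀. Let γ : [0,M] → [0,∞) be continuously differentiable with γ(0) = 0 and (1/C) ≤ γ'(y) ≤ C for all y ∈ [0,M] and some constant C ≥ 1. Define G(x) = ∫_{γ^{-1}(x)}^{M} ν̄(y) dy for x ∈ (0, γ(M)), where γ^{-1} is the inverse of γ. Then lim_{x → 0⁺} x^α G(x) = c₊ · γ'(0)^α, and sup_{x ∈ (0,γ(M))} x^α G(x) < ∞. -/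

import Mathlib

open MeasureTheory Filter Topology Set

lemma stmt14_aux_pt (α cp C₀ x₀ : ℝ) (nubar : ℝ → ℝ)
    (hstable : ∀ y : ℝ, 0 < y → y < x₀ → |y ^ (α + 1) * nubar y - α * cp| ≤ C₀ * y)
    (y : ℝ) (hy : 0 < y) (hyx : y < x₀) :
    |nubar y - α * cp * y ^ (-(α + 1))| ≤ C₀ * y ^ (-α) := by
  have hyp : (0:ℝ) < y ^ (α + 1) := Real.rpow_pos_of_pos hy _
  have hyn : (0:ℝ) < y ^ (-(α + 1)) := Real.rpow_pos_of_pos hy _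
  have h1 : y ^ (-(α + 1)) = (y ^ (α + 1))⁻¹ := Real.rpow_neg hy.le _
  have key : nubar y - α * cp * y ^ (-(α + 1)) =
      (y ^ (α + 1) * nubar y - α * cp) * y ^ (-(α + 1)) := by
    rw [h1]; field_simp
  rw [key, abs_mul, abs_of_pos hyn]
  calc |y ^ (α + 1) * nubar y - α * cp| * y ^ (-(α + 1))
      ≤ (C₀ * y) * y ^ (-(α + 1)) :=
        mul_le_mul_of_nonneg_right (hstable y hy hyx) hyn.le
    _ = C₀ * (y ^ (1:ℝ) * y ^ (-(α + 1))) := by rw [Real.rpow_one]; ring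
    _ = C₀ * y ^ ((1:ℝ) + (-(α + 1))) := by rw [Real.rpow_add hy]
    _ = C₀ * y ^ (-α) := by rw [show (1:ℝ) + (-(α + 1)) = -α by ring]

lemma stmt14_core (α cp M x₀ C₀ : ℝ) (nubar : ℝ → ℝ)
    (hα1 : 1 < α) (hcp : 0 ≤ cp) (hC₀ : 0 ≤ C₀) (hx₀ : 0 < x₀) (hx₀M : x₀ < M)
    (hνmeas : Measurable nubar)
    (hνint2 : IntervalIntegrable nubar volume x₀ M)
    (hstable : ∀ y : ℝ, 0 < y → y < x₀ → |y ^ (α + 1) * nubar y - α * cp| ≤ C₀ * y)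
    (u : ℝ) (hu : 0 < u) (hux : u < x₀) :
    |u ^ α * (∫ y in u..M, nubar y) - cp| ≤
      cp * (u / x₀) ^ α + C₀ * u / (α - 1) + u ^ α * |∫ y in x₀..M, nubar y| := by
  have hα0 : (0:ℝ) < α := by linarith
  have hαm : (0:ℝ) < α - 1 := by linarith
  have hpt := stmt14_aux_pt α cp C₀ x₀ nubar hstable
  have h0not : (0:ℝ) ∉ uIcc u x₀ := by
    rw [uIcc_of_le hux.le]; rintro ⟨h1, -⟩; linarith
  have hInt_r1 : IntervalIntegrable (fun y : ℝ => y ^ (-(α + 1))) volume u x₀ :=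
    intervalIntegral.intervalIntegrable_rpow (Or.inr h0not)
  have hInt_r2 : IntervalIntegrable (fun y : ℝ => y ^ (-α)) volume u x₀ :=
    intervalIntegral.intervalIntegrable_rpow (Or.inr h0not)
  have hne : ∀ᵐ (t : ℝ), t ≠ x₀ := by
    rw [ae_iff]
    have : {t : ℝ | ¬ t ≠ x₀} = {x₀} := by ext t; simp
    rw [this]; exact Real.volume_singleton
  have hIntν : IntervalIntegrable nubar volume u x₀ := by
    rw [intervalIntegrable_iff_integrableOn_Ioc_of_le hux.le,
      integrableOn_Ioc_iff_integrableOn_Ioo]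
    refine Integrable.mono' (g := fun _ => C₀ * u ^ (-α) + α * cp * u ^ (-(α + 1)))
      (integrableOn_const measure_Ioo_lt_top.ne)
      hνmeas.aestronglyMeasurable.restrict ?_
    filter_upwards [ae_restrict_mem measurableSet_Ioo] with y hy
    have hy0 : 0 < y := lt_trans hu hy.1
    have h1 : |nubar y| ≤ C₀ * y ^ (-α) + α * cp * y ^ (-(α + 1)) := by
      have h2 := hpt y hy0 hy.2
      have h3 : (0:ℝ) ≤ α * cp * y ^ (-(α + 1)) := by positivity
      calc |nubar y| = |nubar y - α * cp * y ^ (-(α+1)) + α * cp * y ^ (-(α+1))| := by ring_nf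
        _ ≤ |nubar y - α * cp * y ^ (-(α+1))| + |α * cp * y ^ (-(α+1))| := abs_add_le _ _
        _ ≤ C₀ * y ^ (-α) + α * cp * y ^ (-(α+1)) := by
            rw [abs_of_nonneg h3]; linarith
    refine h1.trans ?_
    have h4 : y ^ (-α) ≤ u ^ (-α) :=
      Real.rpow_le_rpow_of_nonpos hu hy.1.le (by linarith)
    have h5 : y ^ (-(α+1)) ≤ u ^ (-(α+1)) :=
      Real.rpow_le_rpow_of_nonpos hu hy.1.le (by linarith)
    have := Real.norm_eq_abs
    nlinarith [mul_le_mul_of_nonneg_left h4 hC₀, mul_le_mul_of_nonneg_left h5 (mul_nonneg hα0.le hcp)]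
  have hsplit : (∫ y in u..M, nubar y) = (∫ y in u..x₀, nubar y) + ∫ y in x₀..M, nubar y :=
    (intervalIntegral.integral_add_adjacent_intervals hIntν hνint2).symm
  set I1 := ∫ y in u..x₀, nubar y with hI1
  set I2 := ∫ y in x₀..M, nubar y with hI2
  set S := ∫ y in u..x₀, α * cp * y ^ (-(α + 1)) with hS
  have hstint : S = cp * u ^ (-α) - cp * x₀ ^ (-α) := by
    rw [hS, intervalIntegral.integral_const_mul, integral_rpow (Or.inr ⟨by linarith, h0not⟩),
      show -(α + 1) + 1 = -α by ring]
    field_simp [hα0.ne']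
    ring
  have herrint : (∫ y in u..x₀, C₀ * y ^ (-α)) = C₀ * (u ^ (1-α) - x₀ ^ (1-α)) / (α - 1) := by
    rw [intervalIntegral.integral_const_mul, integral_rpow (Or.inr ⟨by linarith, h0not⟩),
      show -α + 1 = 1 - α by ring]
    field_simp [(show (1:ℝ) - α ≠ 0 by linarith), (show α - 1 ≠ 0 by linarith)]
    ring
  have herrnn : (0:ℝ) ≤ C₀ * (u ^ (1-α) - x₀ ^ (1-α)) / (α - 1) := by
    have h4 : x₀ ^ (1-α) ≤ u ^ (1-α) :=
      Real.rpow_le_rpow_of_nonpos hu hux.le (by linarith)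
    have : (0:ℝ) ≤ C₀ * (u ^ (1-α) - x₀ ^ (1-α)) := mul_nonneg hC₀ (by linarith)
    positivity
  have herr : |I1 - S| ≤ C₀ * (u ^ (1-α) - x₀ ^ (1-α)) / (α - 1) := by
    rw [hI1, hS, ← intervalIntegral.integral_sub hIntν (hInt_r1.const_mul _)]
    have hb : ‖∫ y in u..x₀, (nubar y - α * cp * y ^ (-(α+1)))‖ ≤
        |∫ y in u..x₀, C₀ * y ^ (-α)| := by
      refine intervalIntegral.norm_integral_le_abs_of_norm_le ?_ (hInt_r2.const_mul C₀)
      filter_upwards [ae_restrict_mem measurableSet_uIoc, ae_restrict_of_ae hne] with y hy hyne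
      rw [uIoc_of_le hux.le] at hy
      have hy0 : 0 < y := lt_trans hu hy.1
      have hyx : y < x₀ := lt_of_le_of_ne hy.2 hyne
      rw [Real.norm_eq_abs]
      exact hpt y hy0 hyx
    rw [Real.norm_eq_abs] at hb
    refine hb.trans ?_
    rw [herrint, abs_of_nonneg herrnn]
  have hupow : (0:ℝ) < u ^ α := Real.rpow_pos_of_pos hu α
  have e1 : u ^ α * S = cp - cp * (u / x₀) ^ α := by
    rw [hstint, Real.div_rpow hu.le hx₀.le, Real.rpow_neg hu.le, Real.rpow_neg hx₀.le]
    have h2 : x₀ ^ α ≠ 0 := (Real.rpow_pos_of_pos hx₀ α).ne'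
    field_simp
  have e2 : u ^ α * u ^ (1 - α) = u := by
    rw [← Real.rpow_add hu, show α + (1 - α) = (1:ℝ) by ring, Real.rpow_one]
  have hrw : u ^ α * (∫ y in u..M, nubar y) - cp =
      u ^ α * (I1 - S) + (-(cp * (u / x₀) ^ α)) + u ^ α * I2 := by
    rw [hsplit]; linear_combination e1
  rw [hrw]
  have habs := abs_add_three (u ^ α * (I1 - S)) (-(cp * (u / x₀) ^ α)) (u ^ α * I2)
  have ht1 : |u ^ α * (I1 - S)| ≤ C₀ * u / (α - 1) := by
    rw [abs_mul, abs_of_pos hupow]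
    calc u ^ α * |I1 - S| ≤ u ^ α * (C₀ * (u ^ (1-α) - x₀ ^ (1-α)) / (α - 1)) :=
          mul_le_mul_of_nonneg_left herr hupow.le
      _ ≤ u ^ α * (C₀ * u ^ (1-α) / (α - 1)) := by
          have hx0p : (0:ℝ) ≤ x₀ ^ (1-α) := Real.rpow_nonneg hx₀.le _
          have h6 : C₀ * (u ^ (1-α) - x₀ ^ (1-α)) ≤ C₀ * u ^ (1-α) := by nlinarith
          have h7 : C₀ * (u ^ (1-α) - x₀ ^ (1-α)) / (α - 1) ≤ C₀ * u ^ (1-α) / (α - 1) :=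
            div_le_div_of_nonneg_right h6 hαm.le
          exact mul_le_mul_of_nonneg_left h7 hupow.le
      _ = C₀ * u / (α - 1) := by
          rw [show u ^ α * (C₀ * u ^ (1-α) / (α - 1)) = C₀ * (u ^ α * u ^ (1-α)) / (α - 1) by ring,
            e2]
  have ht2 : |(-(cp * (u / x₀) ^ α))| = cp * (u / x₀) ^ α := by
    rw [abs_neg, abs_of_nonneg (by positivity)]
  have ht3 : |u ^ α * I2| = u ^ α * |I2| := by rw [abs_mul, abs_of_pos hupow]
  calc |u ^ α * (I1 - S) + -(cp * (u / x₀) ^ α) + u ^ α * I2|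
      ≤ |u ^ α * (I1 - S)| + |(-(cp * (u / x₀) ^ α))| + |u ^ α * I2| := habs
    _ ≤ cp * (u / x₀) ^ α + C₀ * u / (α - 1) + u ^ α * |I2| := by
        rw [ht2, ht3]; linarith

/-- let `ν̄ ≥ 0` on `(0,M]` behave near `0` like the stable density
`α c₊ y^{−α−1}` up to first order (`α ∈ (1,2)`), and let `γ` be a `C¹` change of variable
on `[0,M]` with `γ(0) = 0` and `1/C ≤ γ' ≤ C`, with inverse `γinv`.  Then the tail mass
`G(x) = ∫_{γ⁻¹(x)}^M ν̄(y) dy` of the pushforward satisfies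
`x^α G(x) → c₊ γ'(0)^α` as `x → 0⁺` and `sup_{x ∈ (0,γ(M))} x^α G(x) < ∞`. -/
theorem stmt14 (α cp M x₀ C₀ C : ℝ) (nubar γ γ' γinv : ℝ → ℝ)
    (hα1 : 1 < α) (hα2 : α < 2) (hcp : 0 ≤ cp) (hM : 0 < M) (hx₀ : 0 < x₀) (hx₀M : x₀ < M)
    (hC : 1 ≤ C)
    (hνmeas : Measurable nubar) (hνnn : ∀ y ∈ Ioc (0 : ℝ) M, 0 ≤ nubar y)
    (hνint : IntegrableOn nubar (Icc x₀ M))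
    (hstable : ∀ y : ℝ, 0 < y → y < x₀ → |y ^ (α + 1) * nubar y - α * cp| ≤ C₀ * y)
    (hγ0 : γ 0 = 0)
    (hγderiv : ∀ y ∈ Icc (0 : ℝ) M, HasDerivWithinAt γ (γ' y) (Icc (0 : ℝ) M) y)
    (hγ'cont : ContinuousOn γ' (Icc (0 : ℝ) M))
    (hγ'bnd : ∀ y ∈ Icc (0 : ℝ) M, 1 / C ≤ γ' y ∧ γ' y ≤ C)
    (hinv1 : ∀ y ∈ Icc (0 : ℝ) M, γinv (γ y) = y)
    (hinv2 : ∀ x ∈ Icc (0 : ℝ) (γ M), γ (γinv x) = x ∧ γinv x ∈ Icc (0 : ℝ) M) :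
    Tendsto (fun x : ℝ => x ^ α * ∫ y in γinv x..M, nubar y) (𝓝[>] 0)
        (𝓝 (cp * γ' 0 ^ α)) ∧
      ∃ C₂ : ℝ, ∀ x ∈ Ioo (0 : ℝ) (γ M), x ^ α * ∫ y in γinv x..M, nubar y ≤ C₂ := by
  have hα0 : (0:ℝ) < α := by linarith
  have hCpos : (0:ℝ) < C := by linarith
  have hC₀ : 0 ≤ C₀ := by
    have h := hstable (x₀/2) (by linarith) (by linarith)
    have h2 := abs_nonneg ((x₀/2) ^ (α+1) * nubar (x₀/2) - α * cp)
    nlinarith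
  have hγcont : ContinuousOn γ (Icc 0 M) := fun y hy => (hγderiv y hy).continuousWithinAt
  have hderivAt : ∀ y ∈ Ioo (0:ℝ) M, HasDerivAt γ (γ' y) y := fun y hy =>
    (hγderiv y (Ioo_subset_Icc_self hy)).hasDerivAt (Icc_mem_nhds hy.1 hy.2)
  have hdiff : DifferentiableOn ℝ γ (interior (Icc (0:ℝ) M)) := by
    rw [interior_Icc]
    exact fun y hy => ((hderivAt y hy).differentiableAt).differentiableWithinAt
  have hup : ∀ a ∈ Icc (0:ℝ) M, ∀ b ∈ Icc (0:ℝ) M, a ≤ b → γ b - γ a ≤ C * (b - a) := by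
    intro a ha b hb hab
    refine (convex_Icc 0 M).image_sub_le_mul_sub_of_deriv_le hγcont hdiff ?_ a ha b hb hab
    intro y hy
    rw [interior_Icc] at hy
    rw [(hderivAt y hy).deriv]
    exact (hγ'bnd y (Ioo_subset_Icc_self hy)).2
  have hlow : ∀ a ∈ Icc (0:ℝ) M, ∀ b ∈ Icc (0:ℝ) M, a ≤ b → (1/C) * (b - a) ≤ γ b - γ a := by
    intro a ha b hb hab
    exact (convex_Icc 0 M).mul_sub_le_image_sub_of_le_deriv hγcont hdiff (fun y hy => by
      rw [interior_Icc] at hy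
      rw [(hderivAt y hy).deriv]
      exact (hγ'bnd y (Ioo_subset_Icc_self hy)).1) a ha b hb hab
  have h0mem : (0:ℝ) ∈ Icc (0:ℝ) M := ⟨le_refl 0, hM.le⟩
  have hMmem : M ∈ Icc (0:ℝ) M := ⟨hM.le, le_refl M⟩
  have hγM : 0 < γ M := by
    have h := hlow 0 h0mem M hMmem hM.le
    rw [hγ0, sub_zero, sub_zero] at h
    have h2 : 0 < (1/C) * M := mul_pos (div_pos one_pos hCpos) hM
    linarith
  have hufacts : ∀ x ∈ Ioo (0:ℝ) (γ M), γ (γinv x) = x ∧ γinv x ∈ Icc (0:ℝ) M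
      ∧ 0 < γinv x ∧ x ≤ C * γinv x ∧ γinv x ≤ C * x := by
    intro x hx
    obtain ⟨h1, h2⟩ := hinv2 x ⟨hx.1.le, hx.2.le⟩
    have hu0 : 0 < γinv x := by
      rcases eq_or_lt_of_le h2.1 with h | h
      · exfalso
        rw [← h, hγ0] at h1
        exact (ne_of_lt hx.1) h1
      · exact h
    have hb1 : γ (γinv x) - γ 0 ≤ C * (γinv x - 0) := hup 0 h0mem _ h2 hu0.le
    have hb2 : (1/C) * (γinv x - 0) ≤ γ (γinv x) - γ 0 := hlow 0 h0mem _ h2 hu0.le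
    rw [hγ0, h1, sub_zero, sub_zero] at hb1 hb2
    refine ⟨h1, h2, hu0, hb1, ?_⟩
    rw [div_mul_eq_mul_div, one_mul, div_le_iff₀ hCpos] at hb2
    nlinarith
  have hνint2 : IntervalIntegrable nubar volume x₀ M := by
    rw [intervalIntegrable_iff_integrableOn_Ioc_of_le hx₀M.le]
    exact hνint.mono_set Ioc_subset_Icc_self
  set K := |∫ y in x₀..M, nubar y| with hK
  have hKnn : 0 ≤ K := abs_nonneg _
  have core := fun u hu hux =>
    stmt14_core α cp M x₀ C₀ nubar hα1 hcp hC₀ hx₀ hx₀M hνmeas hνint2 hstable u hu hux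
  have hInn : ∀ u, 0 < u → u ≤ M → 0 ≤ ∫ y in u..M, nubar y := by
    intro u hu huM
    apply intervalIntegral.integral_nonneg huM
    intro y hy
    exact hνnn y ⟨lt_of_lt_of_le hu hy.1, hy.2⟩
  set B := min (γ M) (x₀ / C) with hB
  have hBpos : 0 < B := lt_min hγM (div_pos hx₀ hCpos)
  have hxev : Ioo (0:ℝ) B ∈ 𝓝[>] (0:ℝ) := Ioo_mem_nhdsGT_of_mem ⟨le_refl 0, hBpos⟩
  have hmemB : ∀ x ∈ Ioo (0:ℝ) B, x ∈ Ioo (0:ℝ) (γ M) :=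
    fun x hx => ⟨hx.1, lt_of_lt_of_le hx.2 (min_le_left _ _)⟩
  have hlin : Tendsto (fun x : ℝ => C * x) (𝓝[>] (0:ℝ)) (𝓝 0) := by
    have h : Tendsto (fun x : ℝ => C * x) (𝓝 0) (𝓝 (C * 0)) :=
      (continuous_const.mul continuous_id).tendsto 0
    have h2 := h.mono_left (nhdsWithin_le_nhds (s := Set.Ioi (0:ℝ)))
    simpa using h2
  have htendu0 : Tendsto γinv (𝓝[>] (0:ℝ)) (𝓝 0) := by
    refine squeeze_zero' (eventually_of_mem hxev fun x hx => ?_)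
      (eventually_of_mem hxev fun x hx => ?_) hlin
    · exact (hufacts x (hmemB x hx)).2.2.1.le
    · exact (hufacts x (hmemB x hx)).2.2.2.2
  have hslope : Tendsto (slope γ 0) (𝓝[Icc (0:ℝ) M \ {0}] 0) (𝓝 (γ' 0)) :=
    hasDerivWithinAt_iff_tendsto_slope.1 (hγderiv 0 h0mem)
  have htenduW : Tendsto γinv (𝓝[>] (0:ℝ)) (𝓝[Icc (0:ℝ) M \ {0}] 0) := by
    rw [tendsto_nhdsWithin_iff]
    refine ⟨htendu0, eventually_of_mem hxev fun x hx => ?_⟩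
    obtain ⟨-, h2, h3, -, -⟩ := hufacts x (hmemB x hx)
    exact ⟨h2, by simpa using h3.ne'⟩
  have hratio : Tendsto (fun x => x / γinv x) (𝓝[>] (0:ℝ)) (𝓝 (γ' 0)) := by
    refine Tendsto.congr' ?_ (hslope.comp htenduW)
    filter_upwards [hxev] with x hx
    obtain ⟨h1, -, h3, -, -⟩ := hufacts x (hmemB x hx)
    show slope γ 0 (γinv x) = x / γinv x
    rw [slope_def_field, h1, hγ0, sub_zero, sub_zero]
  have hFtend : Tendsto (fun x => (γinv x) ^ α * ∫ y in γinv x..M, nubar y)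
      (𝓝[>] (0:ℝ)) (𝓝 cp) := by
    rw [← tendsto_sub_nhds_zero_iff]
    refine squeeze_zero_norm'
      (a := fun x => cp * (C * x / x₀) ^ α + C₀ * (C * x) / (α - 1) + (C * x) ^ α * K) ?_ ?_
    · filter_upwards [hxev] with x hx
      obtain ⟨h1, h2, h3, h4, h5⟩ := hufacts x (hmemB x hx)
      have hxx₀ : x < x₀ / C := lt_of_lt_of_le hx.2 (min_le_right _ _)
      have hux₀ : γinv x < x₀ := by
        refine lt_of_le_of_lt h5 ?_
        calc C * x < C * (x₀ / C) := mul_lt_mul_of_pos_left hxx₀ hCpos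
          _ = x₀ := by field_simp
      have hc := core (γinv x) h3 hux₀
      rw [Real.norm_eq_abs]
      refine hc.trans ?_
      have hb1 : cp * (γinv x / x₀) ^ α ≤ cp * (C * x / x₀) ^ α :=
        mul_le_mul_of_nonneg_left
          (Real.rpow_le_rpow (div_nonneg h3.le hx₀.le)
            (div_le_div_of_nonneg_right h5 hx₀.le) hα0.le) hcp
      have hb2 : C₀ * (γinv x) / (α-1) ≤ C₀ * (C * x) / (α-1) :=
        div_le_div_of_nonneg_right (mul_le_mul_of_nonneg_left h5 hC₀) (by linarith)
      have hb3 : (γinv x) ^ α * K ≤ (C * x) ^ α * K :=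
        mul_le_mul_of_nonneg_right (Real.rpow_le_rpow h3.le h5 hα0.le) hKnn
      linarith
    · have t1 : Tendsto (fun x : ℝ => cp * (C * x / x₀) ^ α) (𝓝[>] (0:ℝ)) (𝓝 0) := by
        have h0 : Tendsto (fun x : ℝ => C * x / x₀) (𝓝[>] (0:ℝ)) (𝓝 0) := by
          have h : Tendsto (fun x : ℝ => C * x / x₀) (𝓝 0) (𝓝 (C * 0 / x₀)) :=
            ((continuous_const.mul continuous_id).div_const x₀).tendsto 0
          have h2 := h.mono_left (nhdsWithin_le_nhds (s := Set.Ioi (0:ℝ)))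
          simpa using h2
        have h1 := h0.rpow_const (Or.inr hα0.le)
        rw [Real.zero_rpow hα0.ne'] at h1
        simpa using h1.const_mul cp
      have t2 : Tendsto (fun x : ℝ => C₀ * (C * x) / (α - 1)) (𝓝[>] (0:ℝ)) (𝓝 0) := by
        have h : Tendsto (fun x : ℝ => C₀ * (C * x) / (α - 1)) (𝓝 0)
            (𝓝 (C₀ * (C * 0) / (α - 1))) :=
          ((continuous_const.mul (continuous_const.mul continuous_id)).div_const
            (α-1)).tendsto 0
        have h2 := h.mono_left (nhdsWithin_le_nhds (s := Set.Ioi (0:ℝ)))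
        simpa using h2
      have t3 : Tendsto (fun x : ℝ => (C * x) ^ α * K) (𝓝[>] (0:ℝ)) (𝓝 0) := by
        have h1 := hlin.rpow_const (Or.inr hα0.le)
        rw [Real.zero_rpow hα0.ne'] at h1
        simpa using h1.mul_const K
      have h := (t1.add t2).add t3
      simpa using h
  have hmain : Tendsto (fun x : ℝ => x ^ α * ∫ y in γinv x..M, nubar y) (𝓝[>] (0:ℝ))
      (𝓝 (cp * γ' 0 ^ α)) := by
    have hprod := (hratio.rpow_const (Or.inr hα0.le)).mul hFtend
    rw [show cp * γ' 0 ^ α = γ' 0 ^ α * cp from mul_comm _ _]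
    refine Tendsto.congr' ?_ hprod
    filter_upwards [hxev] with x hx
    obtain ⟨-, -, h3, -, -⟩ := hufacts x (hmemB x hx)
    have hx0 : 0 < x := hx.1
    show (x / γinv x) ^ α * ((γinv x) ^ α * ∫ y in γinv x..M, nubar y)
      = x ^ α * ∫ y in γinv x..M, nubar y
    rw [Real.div_rpow hx0.le h3.le]
    have hne : (γinv x) ^ α ≠ 0 := (Real.rpow_pos_of_pos h3 α).ne'
    field_simp
  set K' := ∫ y in Ioc x₀ M, |nubar y| with hK'
  have hK'nn : 0 ≤ K' := setIntegral_nonneg measurableSet_Ioc (fun y _ => abs_nonneg _)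
  refine ⟨hmain, C ^ α * (2*cp + C₀*x₀/(α-1) + x₀ ^ α * K) + (C*M) ^ α * K', ?_⟩
  intro x hx
  obtain ⟨h1, h2, h3, h4, h5⟩ := hufacts x hx
  have hxpos : 0 < x := hx.1
  have hT2nn : 0 ≤ (C*M) ^ α * K' :=
    mul_nonneg (Real.rpow_nonneg (mul_nonneg hCpos.le hM.le) _) hK'nn
  have hT1nn : 0 ≤ C ^ α * (2*cp + C₀*x₀/(α-1) + x₀ ^ α * K) := by
    apply mul_nonneg (Real.rpow_nonneg hCpos.le _)
    have ha : 0 ≤ C₀*x₀/(α-1) := div_nonneg (mul_nonneg hC₀ hx₀.le) (by linarith)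
    have hb : 0 ≤ x₀ ^ α * K := mul_nonneg (Real.rpow_nonneg hx₀.le _) hKnn
    linarith
  have hInn' : 0 ≤ ∫ y in γinv x..M, nubar y := hInn (γinv x) h3 h2.2
  by_cases hcase : γinv x < x₀
  · have hc := core (γinv x) h3 hcase
    have hFnn : 0 ≤ (γinv x) ^ α * ∫ y in γinv x..M, nubar y :=
      mul_nonneg (Real.rpow_nonneg h3.le _) hInn'
    have hFb : (γinv x) ^ α * (∫ y in γinv x..M, nubar y)
        ≤ 2*cp + C₀*x₀/(α-1) + x₀ ^ α * K := by
      have h6 : cp * (γinv x / x₀) ^ α ≤ cp :=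
        mul_le_of_le_one_right hcp (Real.rpow_le_one (div_nonneg h3.le hx₀.le)
          (by rw [div_le_one hx₀]; exact hcase.le) hα0.le)
      have h7 : C₀ * (γinv x) / (α-1) ≤ C₀ * x₀ / (α-1) :=
        div_le_div_of_nonneg_right (mul_le_mul_of_nonneg_left hcase.le hC₀) (by linarith)
      have h8 : (γinv x) ^ α * K ≤ x₀ ^ α * K :=
        mul_le_mul_of_nonneg_right (Real.rpow_le_rpow h3.le hcase.le hα0.le) hKnn
      have h9 := (abs_le.1 hc).2
      linarith
    have hxu : (x / γinv x) ^ α ≤ C ^ α :=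
      Real.rpow_le_rpow (div_nonneg hxpos.le h3.le) (by rw [div_le_iff₀ h3]; nlinarith) hα0.le
    have heq : x ^ α * (∫ y in γinv x..M, nubar y)
        = (x / γinv x) ^ α * ((γinv x) ^ α * ∫ y in γinv x..M, nubar y) := by
      rw [Real.div_rpow hxpos.le h3.le]
      have hne : (γinv x) ^ α ≠ 0 := (Real.rpow_pos_of_pos h3 α).ne'
      field_simp
    rw [heq]
    have hmm := mul_le_mul hxu hFb hFnn (Real.rpow_nonneg hCpos.le α)
    linarith
  · push_neg at hcase
    have hsub : Ioc (γinv x) M ⊆ Icc x₀ M := fun y hy => ⟨le_trans hcase hy.1.le, hy.2⟩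
    have hIle : (∫ y in γinv x..M, nubar y) ≤ K' := by
      rw [intervalIntegral.integral_of_le h2.2]
      calc ∫ y in Ioc (γinv x) M, nubar y ≤ ∫ y in Ioc (γinv x) M, |nubar y| :=
            setIntegral_mono_on (hνint.mono_set hsub) (IntegrableOn.mono_set hνint.abs hsub)
              measurableSet_Ioc (fun y _ => le_abs_self _)
        _ ≤ K' := setIntegral_mono_set (IntegrableOn.mono_set hνint.abs Ioc_subset_Icc_self)
              (ae_restrict_of_ae (ae_of_all _ fun y => abs_nonneg _))
              (HasSubset.Subset.eventuallyLE (Ioc_subset_Ioc_left hcase))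
    have hγMle : γ M ≤ C * M := by
      have h := hup 0 h0mem M hMmem hM.le
      rw [hγ0, sub_zero, sub_zero] at h
      exact h
    have hxle : x ≤ C * M := le_trans hx.2.le hγMle
    have hxpow : x ^ α ≤ (C*M) ^ α := Real.rpow_le_rpow hxpos.le hxle hα0.le
    have hmm := mul_le_mul hxpow hIle hInn'
      (Real.rpow_nonneg (mul_nonneg hCpos.le hM.le) α)
    linarith
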